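/- For every g = (z,t) ∈ V₁ × V₂ with g ≠ (0,0) and all u, v ∈ V₁, the symmetrized second horizontal derivative of the gauge N satisfies N_{,uv}(g) = N(g)⁻⁷ [ a(g) ψ(g) ⟨u,v⟩ + 2 a(g) ( ⟨z,u⟩⟨z,v⟩ + ⟨[z,u],[z,v]⟩ ) − 3 ⟨A(g),u⟩⟨A(g),v⟩ ]. -/

import Mathlib

open scoped RealInnerProductSpace
open MeasureTheory

noncomputable section

variable {V₁ V₂ : Type*} [NormedAddCommGroup V₁] [InnerProductSpace ℝ V₁]
  [NormedAddCommGroup V₂] [InnerProductSpace ℝ V₂]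

/-- The horizontal derivative of `f : V₁ × V₂ → ℝ` at `g = (z,t)` in the horizontal
direction `v ∈ V₁`, namely `Df(g)(v, ½[z,v])`. -/
def Xd (b : V₁ →ₗ[ℝ] V₁ →ₗ[ℝ] V₂) (v : V₁) (f : V₁ × V₂ → ℝ) (g : V₁ × V₂) : ℝ :=
  fderiv ℝ f g (v, (2⁻¹ : ℝ) • b g.1 v)

/-- The horizontal gradient: the unique vector of `V₁` representing the linear functional
`v ↦ X_v f (g)` via the inner product of `V₁`. -/
def Xgrad [FiniteDimensional ℝ V₁] [FiniteDimensional ℝ V₂]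
    (b : V₁ →ₗ[ℝ] V₁ →ₗ[ℝ] V₂) (f : V₁ × V₂ → ℝ) (g : V₁ × V₂) : V₁ :=
  (InnerProductSpace.toDual ℝ V₁).symm
    (LinearMap.toContinuousLinearMap
      ((fderiv ℝ f g).toLinearMap.comp
        (LinearMap.prod LinearMap.id ((2⁻¹ : ℝ) • b g.1))))

/-- The symmetrized second horizontal derivative `f_{,uv} = ½(X_u X_v f + X_v X_u f)`. -/
def X2sym (b : V₁ →ₗ[ℝ] V₁ →ₗ[ℝ] V₂) (u v : V₁) (f : V₁ × V₂ → ℝ) (g : V₁ × V₂) : ℝ :=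
  (Xd b u (Xd b v f) g + Xd b v (Xd b u f) g) / 2

/-- The horizontal (sub-)Laplacian `𝓛 f = Σᵢ X_{eᵢ} X_{eᵢ} f`. -/
def hLap [FiniteDimensional ℝ V₁] (b : V₁ →ₗ[ℝ] V₁ →ₗ[ℝ] V₂) (f : V₁ × V₂ → ℝ)
    (g : V₁ × V₂) : ℝ :=
  ∑ i, Xd b (stdOrthonormalBasis ℝ V₁ i) (Xd b (stdOrthonormalBasis ℝ V₁ i) f) g

/-- The horizontal ∞-Laplacian `𝓛_∞ f = Σ_{i,j} f_{,eᵢeⱼ} X_{eᵢ}f X_{eⱼ}f`. -/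
def hInfLap [FiniteDimensional ℝ V₁] (b : V₁ →ₗ[ℝ] V₁ →ₗ[ℝ] V₂) (f : V₁ × V₂ → ℝ)
    (g : V₁ × V₂) : ℝ :=
  ∑ i, ∑ j, X2sym b (stdOrthonormalBasis ℝ V₁ i) (stdOrthonormalBasis ℝ V₁ j) f g *
    Xd b (stdOrthonormalBasis ℝ V₁ i) f g * Xd b (stdOrthonormalBasis ℝ V₁ j) f g

/-- `ψ(z,t) = |z|²`. -/
def psiF (g : V₁ × V₂) : ℝ := ‖g.1‖ ^ 2

/-- `χ(z,t) = |t|²`. -/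
def chiF (g : V₁ × V₂) : ℝ := ‖g.2‖ ^ 2

/-- `a(z,t) = ψ² + 16χ = |z|⁴ + 16|t|²`. -/
def aF (g : V₁ × V₂) : ℝ := psiF g ^ 2 + 16 * chiF g

/-- The Folland–Kaplan gauge `N = a^{1/4}`. -/
def Ng (g : V₁ × V₂) : ℝ := aF g ^ ((1 : ℝ) / 4)

/-- `A(z,t) = |z|² z + 4 J(t) z`. -/
def Ag (J : V₂ → V₁ →ₗ[ℝ] V₁) (g : V₁ × V₂) : V₁ :=
  ‖g.1‖ ^ 2 • g.1 + (4 : ℝ) • J g.2 g.1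

/-- The group law `(z,t)·(z',t') = (z+z', t+t'+½[z,z'])`. -/
def gmul (b : V₁ →ₗ[ℝ] V₁ →ₗ[ℝ] V₂) (g h : V₁ × V₂) : V₁ × V₂ :=
  (g.1 + h.1, g.2 + h.2 + (2⁻¹ : ℝ) • b g.1 h.1)

/-- The group inverse `(z,t)⁻¹ = (−z,−t)`. -/
def ginv (g : V₁ × V₂) : V₁ × V₂ := (-g.1, -g.2)

end
set_option linter.unusedSectionVars false
section Aux
variable {V₁ V₂ : Type*} [NormedAddCommGroup V₁] [InnerProductSpace ℝ V₁]
  [FiniteDimensional ℝ V₁] [NormedAddCommGroup V₂] [InnerProductSpace ℝ V₂]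
  [FiniteDimensional ℝ V₂]

lemma aF_pos {g : V₁ × V₂} (hg : g ≠ (0,0)) : 0 < aF g := by
  have h : g.1 ≠ 0 ∨ g.2 ≠ 0 := by
    by_contra h; push_neg at h; exact hg (Prod.ext h.1 h.2)
  simp only [aF, psiF, chiF]
  rcases h with h | h
  · have h1 : 0 < ‖g.1‖ := norm_pos_iff.mpr h
    nlinarith [pow_pos (pow_pos h1 2) 2, sq_nonneg ‖g.2‖]
  · have h1 : 0 < ‖g.2‖ := norm_pos_iff.mpr h
    nlinarith [pow_pos h1 2, sq_nonneg (‖g.1‖^2)]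

lemma aF_eq : (aF : V₁ × V₂ → ℝ) = fun p => ⟪p.1, p.1⟫*⟪p.1, p.1⟫ + 16*⟪p.2, p.2⟫ := by
  funext p; simp [aF, psiF, chiF, real_inner_self_eq_norm_sq]; ring

lemma hasFDerivAt_aF (g : V₁ × V₂) :
    HasFDerivAt (aF : V₁ × V₂ → ℝ)
      ((2 * ⟪g.1, g.1⟫) • ((fderivInnerCLM ℝ (g.1, g.1)).comp
          ((ContinuousLinearMap.fst ℝ V₁ V₂).prod (ContinuousLinearMap.fst ℝ V₁ V₂))) +
        (16:ℝ) • ((fderivInnerCLM ℝ (g.2, g.2)).comp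
          ((ContinuousLinearMap.snd ℝ V₁ V₂).prod (ContinuousLinearMap.snd ℝ V₁ V₂)))) g := by
  rw [aF_eq]
  have h1 : HasFDerivAt (fun p : V₁ × V₂ => ⟪p.1, p.1⟫)
      ((fderivInnerCLM ℝ (g.1, g.1)).comp
        ((ContinuousLinearMap.fst ℝ V₁ V₂).prod (ContinuousLinearMap.fst ℝ V₁ V₂))) g :=
    (hasFDerivAt_fst).inner ℝ (hasFDerivAt_fst)
  have h2 : HasFDerivAt (fun p : V₁ × V₂ => ⟪p.2, p.2⟫)
      ((fderivInnerCLM ℝ (g.2, g.2)).comp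
        ((ContinuousLinearMap.snd ℝ V₁ V₂).prod (ContinuousLinearMap.snd ℝ V₁ V₂))) g :=
    (hasFDerivAt_snd).inner ℝ (hasFDerivAt_snd)
  have := (h1.mul h1).add (h2.const_mul 16)
  simpa [two_mul, add_smul, smul_smul, Pi.mul_def, Pi.add_def] using this

lemma Xd_Ng_eq (b : V₁ →ₗ[ℝ] V₁ →ₗ[ℝ] V₂) {g : V₁ × V₂} (hg : aF g ≠ 0) (v : V₁) :
    Xd b v Ng g = aF g ^ (-(3:ℝ)/4) * (‖g.1‖^2 * ⟪g.1, v⟫ + 4 * ⟪b g.1 v, g.2⟫) := by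
  have ha := hasFDerivAt_aF g
  have hN := ha.rpow_const (Or.inl hg : aF g ≠ 0 ∨ 1 ≤ (1:ℝ)/4)
  have hNg : (Ng : V₁ × V₂ → ℝ) = fun p => aF p ^ ((1:ℝ)/4) := rfl
  rw [Xd, hNg, hN.fderiv]
  simp [fderivInnerCLM_apply, inner_smul_right, real_inner_comm g.2 (b g.1 v),
    real_inner_self_eq_norm_sq, real_inner_comm g.1 v, real_inner_smul_left]
  ring_nf


lemma Xd_G_eq (b : V₁ →ₗ[ℝ] V₁ →ₗ[ℝ] V₂) {g : V₁ × V₂} (hg : aF g ≠ 0) (u v : V₁) :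
    Xd b u (fun p : V₁ × V₂ => aF p ^ (-(3:ℝ)/4) * (‖p.1‖^2 * ⟪p.1, v⟫ + 4 * ⟪b p.1 v, p.2⟫)) g =
      (-(3:ℝ))/4 * aF g ^ (-(7:ℝ)/4) * (4 * (‖g.1‖^2 * ⟪g.1, u⟫ + 4 * ⟪b g.1 u, g.2⟫)) *
          (‖g.1‖^2 * ⟪g.1, v⟫ + 4 * ⟪b g.1 v, g.2⟫) +
        aF g ^ (-(3:ℝ)/4) * (2 * ⟪g.1, u⟫ * ⟪g.1, v⟫ + ‖g.1‖^2 * ⟪u, v⟫ +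
          4 * ⟪b u v, g.2⟫ + 2 * ⟪b g.1 u, b g.1 v⟫) := by
  have hfun : (fun p : V₁ × V₂ => aF p ^ (-(3:ℝ)/4) * (‖p.1‖^2 * ⟪p.1, v⟫ + 4 * ⟪b p.1 v, p.2⟫))
      = (fun p : V₁ × V₂ => aF p ^ (-(3:ℝ)/4) * (⟪p.1, p.1⟫ * ⟪p.1, v⟫ + 4 * ⟪b p.1 v, p.2⟫)) := by
    funext p; rw [real_inner_self_eq_norm_sq]
  have h_rpow := (hasFDerivAt_aF g).rpow_const (Or.inl hg : aF g ≠ 0 ∨ 1 ≤ -(3:ℝ)/4)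
  have hBv : HasFDerivAt (fun p : V₁ × V₂ => (b p.1 v : V₂))
      ((LinearMap.toContinuousLinearMap (b.flip v)).comp (ContinuousLinearMap.fst ℝ V₁ V₂)) g := by
    have := ((LinearMap.toContinuousLinearMap (b.flip v)).comp
        (ContinuousLinearMap.fst ℝ V₁ V₂)).hasFDerivAt (x := g)
    convert this using 2
    rfl
  have h1 : HasFDerivAt (fun p : V₁ × V₂ => ⟪p.1, p.1⟫)
      ((fderivInnerCLM ℝ (g.1, g.1)).comp
        ((ContinuousLinearMap.fst ℝ V₁ V₂).prod (ContinuousLinearMap.fst ℝ V₁ V₂))) g :=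
    (hasFDerivAt_fst).inner ℝ (hasFDerivAt_fst)
  have h1v : HasFDerivAt (fun p : V₁ × V₂ => ⟪p.1, v⟫)
      ((fderivInnerCLM ℝ (g.1, v)).comp
        ((ContinuousLinearMap.fst ℝ V₁ V₂).prod (0 : (V₁ × V₂) →L[ℝ] V₁))) g :=
    (hasFDerivAt_fst).inner ℝ (hasFDerivAt_const v g)
  have h2 : HasFDerivAt (fun p : V₁ × V₂ => ⟪(b p.1 v : V₂), p.2⟫)
      ((fderivInnerCLM ℝ (b g.1 v, g.2)).comp
        (((LinearMap.toContinuousLinearMap (b.flip v)).comp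
          (ContinuousLinearMap.fst ℝ V₁ V₂)).prod (ContinuousLinearMap.snd ℝ V₁ V₂))) g :=
    hBv.inner ℝ (hasFDerivAt_snd)
  have hF := h_rpow.mul ((h1.mul h1v).add (h2.const_mul 4))
  simp only [Pi.mul_def, Pi.add_def] at hF
  rw [Xd, hfun, hF.fderiv]
  simp [fderivInnerCLM_apply, inner_smul_right, real_inner_smul_left,
    real_inner_self_eq_norm_sq, real_inner_comm g.1 u, real_inner_comm g.1 v,
    real_inner_comm g.2 (b g.1 u), real_inner_comm g.2 (b g.1 v),
    real_inner_comm g.2 (b u v), real_inner_comm (b g.1 v) (b g.1 u)]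
  try ring_nf

end Aux
theorem riesz_htype_hessian_N {V₁ V₂ : Type*} [NormedAddCommGroup V₁] [InnerProductSpace ℝ V₁]
    [FiniteDimensional ℝ V₁] [NormedAddCommGroup V₂] [InnerProductSpace ℝ V₂]
    [FiniteDimensional ℝ V₂] (m k : ℕ) (hm : 1 ≤ m) (hk : 1 ≤ k)
    (hdV₁ : Module.finrank ℝ V₁ = m) (hdV₂ : Module.finrank ℝ V₂ = k)
    (b : V₁ →ₗ[ℝ] V₁ →ₗ[ℝ] V₂) (hskew : ∀ z z' : V₁, b z z' = - b z' z)
    (J : V₂ → V₁ →ₗ[ℝ] V₁) (hJ : ∀ (t : V₂) (z z' : V₁), ⟪J t z, z'⟫ = ⟪b z z', t⟫) :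
    ∀ g : V₁ × V₂, g ≠ (0, 0) → ∀ u v : V₁,
      X2sym b u v Ng g =
        ((Ng g) ^ 7)⁻¹ * (aF g * psiF g * ⟪u, v⟫ +
          2 * aF g * (⟪g.1, u⟫ * ⟪g.1, v⟫ + ⟪b g.1 u, b g.1 v⟫) -
          3 * ⟪Ag J g, u⟫ * ⟪Ag J g, v⟫) := by
  intro g hg u v
  have hapos : 0 < aF g := aF_pos hg
  have hane : aF g ≠ 0 := ne_of_gt hapos
  have hcont : ContinuousAt (aF : V₁ × V₂ → ℝ) g :=
    (hasFDerivAt_aF g).differentiableAt.continuousAt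
  have hev : ∀ᶠ p in nhds g, aF p ≠ 0 := hcont.eventually_ne hane
  have hXv : Xd b v Ng =ᶠ[nhds g]
      (fun p : V₁ × V₂ => aF p ^ (-(3:ℝ)/4) * (‖p.1‖^2 * ⟪p.1, v⟫ + 4 * ⟪b p.1 v, p.2⟫)) :=
    hev.mono fun p hp => Xd_Ng_eq b hp v
  have hXu : Xd b u Ng =ᶠ[nhds g]
      (fun p : V₁ × V₂ => aF p ^ (-(3:ℝ)/4) * (‖p.1‖^2 * ⟪p.1, u⟫ + 4 * ⟪b p.1 u, p.2⟫)) :=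
    hev.mono fun p hp => Xd_Ng_eq b hp u
  have key1 : Xd b u (Xd b v Ng) g =
      Xd b u (fun p : V₁ × V₂ => aF p ^ (-(3:ℝ)/4) * (‖p.1‖^2 * ⟪p.1, v⟫ + 4 * ⟪b p.1 v, p.2⟫)) g := by
    simp only [Xd]; rw [hXv.fderiv_eq]
  have key2 : Xd b v (Xd b u Ng) g =
      Xd b v (fun p : V₁ × V₂ => aF p ^ (-(3:ℝ)/4) * (‖p.1‖^2 * ⟪p.1, u⟫ + 4 * ⟪b p.1 u, p.2⟫)) g := by
    simp only [Xd]; rw [hXu.fderiv_eq]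
  have hN7 : ((Ng g) ^ 7)⁻¹ = aF g ^ (-(7:ℝ)/4) := by
    have h7 : (Ng g) ^ 7 = aF g ^ ((7:ℝ)/4) := by
      rw [Ng, ← Real.rpow_natCast (aF g ^ ((1:ℝ)/4)) 7, ← Real.rpow_mul hapos.le]
      norm_num
    rw [h7, ← Real.rpow_neg hapos.le]
    norm_num
  have h34 : aF g ^ (-(3:ℝ)/4) = aF g * aF g ^ (-(7:ℝ)/4) := by
    rw [show (-(3:ℝ)/4) = 1 + (-(7:ℝ)/4) by norm_num, Real.rpow_add hapos, Real.rpow_one]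
  have hAgu : ∀ w : V₁, ⟪Ag J g, w⟫ = ‖g.1‖^2 * ⟪g.1, w⟫ + 4 * ⟪b g.1 w, g.2⟫ := by
    intro w
    simp [Ag, inner_add_left, real_inner_smul_left, hJ]
  have hbvu : ⟪b v u, g.2⟫ = -⟪b u v, g.2⟫ := by rw [hskew v u, inner_neg_left]
  have hpsi : psiF g = ‖g.1‖^2 := rfl
  rw [X2sym, key1, key2, Xd_G_eq b hane u v, Xd_G_eq b hane v u, hN7, hAgu, hAgu, hpsi,
    h34, hbvu, real_inner_comm v u, real_inner_comm (b g.1 v) (b g.1 u)]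
  ring
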